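/- Let P ⊂ ℝ^n be an n-dimensional lattice-face polytope with 0 a vertex of P, and let SP = conv(P ∪ (−P)). Then for all 1 ≤ j ≤ i ≤ n: λ_j(π^{(n−i)}(SP), ℤ^i) ≥ λ_j(SP, ℤ^n). -/

import Mathlib

open Finset Pointwise MeasureTheory

/-- The integer lattice `ℤⁿ` viewed as a subset of `ℝⁿ`. -/
def intLattice (n : ℕ) : Set (Fin n → ℝ) := {x | ∀ j, ∃ m : ℤ, x j = (m : ℝ)}

/-- The `i`-th successive minimum (for `1 ≤ i ≤ n`) of a set `K ⊆ ℝⁿ` with respect to `ℤⁿ`: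
the infimum of all `l > 0` such that `l • K` contains at least `i` linearly independent
lattice points. -/
noncomputable def succMinima {n : ℕ} (K : Set (Fin n → ℝ)) (i : ℕ) : ℝ :=
  sInf {l : ℝ | 0 < l ∧
    i ≤ Module.finrank ℝ (Submodule.span ℝ ((l • K) ∩ intLattice n))}

/-- The projection `π^{(n−i)} : ℝⁿ → ℝⁱ` that forgets the last `n − i` coordinates. -/
def projMap (n i : ℕ) (h : i ≤ n) (x : Fin n → ℝ) : Fin i → ℝ :=
  fun j => x (Fin.castLE h j)

/-- `P` is a lattice-face polytope: for every `0 ≤ k ≤ n−1` and every nonempty subset `U`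
of the vertex set of `P` spanning a `k`-dimensional affine space,
`π^{(n−k)}(aff(U) ∩ ℤⁿ) = ℤᵏ`. -/
def IsLatticeFace (n : ℕ) (P : Set (Fin n → ℝ)) : Prop :=
  ∀ k : ℕ, ∀ hk : k < n, ∀ U : Set (Fin n → ℝ),
    U ⊆ Set.extremePoints ℝ P → U.Nonempty →
    Module.finrank ℝ (affineSpan ℝ U).direction = k →
    projMap n k hk.le '' ((affineSpan ℝ U : Set (Fin n → ℝ)) ∩ intLattice n) = intLattice k

section Aux

open Module

/-- Monotonicity of dilates of a convex set containing the origin. -/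
private lemma smul_mono_set {m : ℕ} {A : Set (Fin m → ℝ)} (hA : Convex ℝ A)
    (h0 : (0 : Fin m → ℝ) ∈ A) {s t : ℝ} (hs : 0 < s) (hst : s ≤ t) :
    s • A ⊆ t • A := by
  intro x hx
  obtain ⟨a, ha, rfl⟩ := hx
  have ht : 0 < t := hs.trans_le hst
  have hmem : (s / t) • a + (1 - s / t) • (0 : Fin m → ℝ) ∈ A :=
    hA ha h0 (div_nonneg hs.le ht.le)
      (sub_nonneg.2 (div_le_one_of_le₀ hst ht.le)) (by ring)
  rw [smul_zero, add_zero] at hmem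
  refine ⟨(s / t) • a, hmem, ?_⟩
  show t • ((s / t) • a) = s • a
  rw [smul_smul]
  congr 1
  field_simp

private lemma vectorSpan_eq_span {m : ℕ} {s : Set (Fin m → ℝ)} (h0 : (0 : Fin m → ℝ) ∈ s) :
    vectorSpan ℝ s = Submodule.span ℝ s := by
  apply le_antisymm
  · rw [vectorSpan_def]
    refine Submodule.span_le.2 ?_
    rintro x ⟨a, ha, b, hb, rfl⟩
    have : a - b ∈ Submodule.span ℝ s :=
      sub_mem (Submodule.subset_span ha) (Submodule.subset_span hb)
    simpa [vsub_eq_sub] using this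
  · refine Submodule.span_le.2 fun x hx => ?_
    have h := vsub_mem_vectorSpan ℝ hx h0
    simpa [vsub_eq_sub] using h

private lemma coe_affineSpan_zero {m : ℕ} {s : Set (Fin m → ℝ)} (h0 : (0 : Fin m → ℝ) ∈ s) :
    (affineSpan ℝ s : Set (Fin m → ℝ)) = (Submodule.span ℝ s : Set (Fin m → ℝ)) := by
  have h0' : (0 : Fin m → ℝ) ∈ affineSpan ℝ s := subset_affineSpan ℝ s h0
  ext x
  constructor
  · intro hx
    have h := AffineSubspace.vsub_mem_direction hx h0'
    rw [direction_affineSpan, vectorSpan_eq_span h0] at h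
    simpa [vsub_eq_sub] using h
  · intro hx
    have hd : x ∈ (affineSpan ℝ s).direction := by
      rw [direction_affineSpan, vectorSpan_eq_span h0]; exact hx
    have h := AffineSubspace.vadd_mem_of_mem_direction hd h0'
    simpa [vadd_eq_add] using h

private lemma single_mem_intLattice {m : ℕ} (b : Fin m) :
    Pi.single b (1 : ℝ) ∈ intLattice m := by
  intro j
  by_cases h : j = b
  · exact ⟨1, by simp [h, Pi.single_apply]⟩
  · exact ⟨0, by simp [Pi.single_apply, h]⟩

private lemma span_singles_top {m : ℕ} :
    Submodule.span ℝ (Set.range fun b : Fin m => Pi.single b (1 : ℝ)) = ⊤ := by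
  have h := (Pi.basisFun ℝ (Fin m)).span_eq
  have hr : ⇑(Pi.basisFun ℝ (Fin m)) = fun b : Fin m => Pi.single b (1 : ℝ) := by
    funext b
    exact Pi.basisFun_apply ℝ (Fin m) b
  rwa [hr] at h

end Aux

section Lift

open Module

set_option maxHeartbeats 1000000 in
/-- The key lifting lemma: any lattice point of a dilate of the projection of `SP`
lifts to a lattice point of the same dilate of `SP`. -/
private lemma lift_lemma {n i : ℕ} (hi1 : 1 ≤ i) (hin : i < n)
    {P SP E : Set (Fin n → ℝ)}
    (hlf : IsLatticeFace n P)
    (hE : E = Set.extremePoints ℝ P)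
    (h0ext : (0 : Fin n → ℝ) ∈ Set.extremePoints ℝ P)
    (hSPE : SP = convexHull ℝ (E ∪ -E))
    (hSPconv : Convex ℝ SP) (h0SP : (0 : Fin n → ℝ) ∈ SP)
    (hKconv : Convex ℝ (projMap n i hin.le '' SP))
    (hKcomp : IsCompact (projMap n i hin.le '' SP))
    (h0int : (0 : Fin i → ℝ) ∈ interior (projMap n i hin.le '' SP))
    (hKhull : projMap n i hin.le '' SP = convexHull ℝ (projMap n i hin.le '' (E ∪ -E)))
    {l : ℝ} (hl : 0 < l) {y : Fin i → ℝ} (hylat : y ∈ intLattice i)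
    (hyK : y ∈ l • (projMap n i hin.le '' SP)) :
    ∃ x : Fin n → ℝ, x ∈ (l • SP) ∩ intLattice n ∧ projMap n i hin.le x = y := by
  classical
  set π := projMap n i hin.le with hπdef
  set K := π '' SP with hKdef
  by_cases hy0 : y = 0
  · refine ⟨0, ⟨⟨0, h0SP, smul_zero l⟩, fun j => ⟨0, by simp⟩⟩, ?_⟩
    rw [hy0]; rfl
  -- a bound for K
  obtain ⟨R, hR⟩ := isBounded_iff_forall_norm_le.1 hKcomp.isBounded
  have hRpos : 0 < R := by
    obtain ⟨z0, hz0, hyz⟩ := hyK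
    have hz0ne : z0 ≠ 0 := by
      rintro rfl; exact hy0 (by rw [← hyz]; simp)
    exact lt_of_lt_of_le (norm_pos_iff.2 hz0ne) (hR z0 hz0)
  have hyR : 0 < ‖y‖ / R := div_pos (norm_pos_iff.2 hy0) hRpos
  -- the critical dilate
  set T := {t : ℝ | t ∈ Set.Icc (‖y‖ / R) l ∧ t⁻¹ • y ∈ K} with hTdef
  have hnormT : ∀ t : ℝ, 0 < t → t⁻¹ • y ∈ K → ‖y‖ / R ≤ t := by
    intro t ht hmem
    have h1 : ‖t⁻¹ • y‖ ≤ R := hR _ hmem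
    rw [norm_smul, Real.norm_eq_abs, abs_inv, abs_of_pos ht] at h1
    rw [div_le_iff₀ hRpos]
    calc ‖y‖ = t * (t⁻¹ * ‖y‖) := by field_simp
    _ ≤ t * R := by
      apply mul_le_mul_of_nonneg_left _ ht.le
      exact h1
  have hlT : l ∈ T := by
    refine ⟨⟨?_, le_refl l⟩, ?_⟩
    · exact hnormT l hl ((Set.mem_smul_set_iff_inv_smul_mem₀ hl.ne' _ _).1 hyK)
    · exact (Set.mem_smul_set_iff_inv_smul_mem₀ hl.ne' _ _).1 hyK
  have hTbdd : BddBelow T := ⟨‖y‖ / R, fun t ht => ht.1.1⟩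
  have hTclosed : IsClosed T := by
    have hcont : ContinuousOn (fun t : ℝ => t⁻¹ • y) (Set.Icc (‖y‖ / R) l) := by
      apply ContinuousOn.fun_smul _ continuousOn_const
      apply continuousOn_inv₀.mono
      intro t ht
      simp only [Set.mem_compl_iff, Set.mem_singleton_iff]
      exact ne_of_gt (lt_of_lt_of_le hyR ht.1)
    exact hcont.preimage_isClosed_of_isClosed isClosed_Icc hKcomp.isClosed
  set ts := sInf T with htsdef
  have htsT : ts ∈ T := hTclosed.csInf_mem ⟨l, hlT⟩ hTbdd
  have htspos : 0 < ts := lt_of_lt_of_le hyR htsT.1.1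
  have htsl : ts ≤ l := htsT.1.2
  set q := ts⁻¹ • y with hqdef
  have hqK : q ∈ K := htsT.2
  -- q is not interior
  have hqint : q ∉ interior K := by
    intro hq
    have hcont : ContinuousAt (fun t : ℝ => t⁻¹ • y) ts :=
      ContinuousAt.smul (continuousAt_inv₀ htspos.ne') continuousAt_const
    have hnhds : (fun t : ℝ => t⁻¹ • y) ⁻¹' interior K ∈ nhds ts :=
      hcont.preimage_mem_nhds (isOpen_interior.mem_nhds hq)
    obtain ⟨ε, hε, hball⟩ := Metric.mem_nhds_iff.1 hnhds
    set t := max (ts / 2) (ts - ε / 2) with htdef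
    have htlt : t < ts := max_lt (by linarith) (by linarith)
    have htpos : 0 < t := lt_of_lt_of_le (by linarith) (le_max_left _ _)
    have htball : t ∈ Metric.ball ts ε := by
      rw [Metric.mem_ball, Real.dist_eq, abs_lt]
      constructor
      · have := le_max_right (ts / 2) (ts - ε / 2); linarith
      · linarith
    have hmem : t⁻¹ • y ∈ K := interior_subset (hball htball)
    have htT : t ∈ T := ⟨⟨hnormT t htpos hmem, le_of_lt (lt_of_lt_of_le htlt htsl)⟩, hmem⟩
    exact absurd (csInf_le hTbdd htT) (not_le.2 htlt)
  -- supporting functional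
  obtain ⟨f, hf⟩ := geometric_hahn_banach_open_point hKconv.interior isOpen_interior hqint
  have hfq : 0 < f q := by
    have h := hf 0 h0int
    rwa [map_zero] at h
  have hfK : ∀ a ∈ K, f a ≤ f q := by
    intro a ha
    by_contra hlt
    push_neg at hlt
    -- use a combination of 0 (interior) and a
    set θ := (f a - f q) / (2 * f a) with hθdef
    have hfa : 0 < f a := lt_trans hfq hlt
    have hθpos : 0 < θ := div_pos (by linarith) (by linarith)
    have hθlt : θ < 1 := by
      rw [div_lt_one (by linarith)]; linarith
    have hmem : θ • (0 : Fin i → ℝ) + (1 - θ) • a ∈ interior K :=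
      hKconv.combo_interior_closure_mem_interior h0int (subset_closure ha)
        hθpos (by linarith) (by ring)
    have := hf _ hmem
    rw [smul_zero, zero_add, _root_.map_smul, smul_eq_mul] at this
    have hcalc : (1 - θ) * f a = f a - (f a - f q) / 2 := by
      rw [hθdef]
      field_simp
    rw [hcalc] at this
    linarith
  -- decompose q into a positive affinely independent combination on the face
  have hqhull : q ∈ convexHull ℝ (π '' (E ∪ -E)) := by rw [← hKhull]; exact hqK
  obtain ⟨ι, hfin, z, w, hzr, hai, hwpos, hwsum, hzq⟩ :=
    eq_pos_convex_span_of_mem_convexHull hqhull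
  haveI : Nonempty ι := by
    rcases isEmpty_or_nonempty ι with hemp | hne
    · exfalso
      rw [Finset.univ_eq_empty, Finset.sum_empty] at hwsum
      exact one_ne_zero hwsum.symm
    · exact hne
  have hzK : ∀ a : ι, z a ∈ K := by
    intro a
    rw [hKhull]
    exact subset_convexHull ℝ _ (hzr ⟨a, rfl⟩)
  -- all the z a lie on the face {f = f q}
  have hfz : ∀ a : ι, f (z a) = f q := by
    have hsum0 : ∑ a : ι, w a * (f q - f (z a)) = 0 := by
      have h1 : ∑ a : ι, w a * f (z a) = f q := by
        have := congrArg f hzq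
        rw [map_sum] at this
        simpa [_root_.map_smul, smul_eq_mul] using this
      simp only [mul_sub]
      rw [Finset.sum_sub_distrib, h1, ← Finset.sum_mul, hwsum, one_mul, sub_self]
    have hterm := (Finset.sum_eq_zero_iff_of_nonneg
      (fun a _ => mul_nonneg (hwpos a).le (sub_nonneg.2 (hfK _ (hzK a))))).1 hsum0
    intro a
    have := hterm a (Finset.mem_univ a)
    rcases mul_eq_zero.1 this with h | h
    · exact absurd h (hwpos a).ne'
    · linarith [sub_eq_zero.1 h]
  -- cardinality bound
  set g := (f : (Fin i → ℝ) →ₗ[ℝ] ℝ) with hgdef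
  have hgrange : LinearMap.range g = ⊤ := by
    rw [LinearMap.range_eq_top]
    intro r
    refine ⟨(r / f q) • q, ?_⟩
    have : g ((r / f q) • q) = (r / f q) * g q := by
      rw [_root_.map_smul, smul_eq_mul]
    rw [this]
    have hgq : g q = f q := rfl
    rw [hgq]
    field_simp
  have hkerg : finrank ℝ (LinearMap.ker g) = i - 1 := by
    have h1 := LinearMap.finrank_range_add_finrank_ker g
    rw [hgrange, finrank_top, Module.finrank_self, Module.finrank_fin_fun] at h1
    omega
  have hvsker : vectorSpan ℝ (Set.range z) ≤ LinearMap.ker g := by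
    rw [vectorSpan_def]
    refine Submodule.span_le.2 ?_
    rintro x ⟨u, ⟨a, rfl⟩, v, ⟨b, rfl⟩, rfl⟩
    rw [SetLike.mem_coe, LinearMap.mem_ker]
    have : g (z a -ᵥ z b) = f (z a) - f (z b) := by
      rw [vsub_eq_sub, map_sub]; rfl
    rw [this, hfz a, hfz b, sub_self]
  set nι := Fintype.card ι with hnι
  have hnιpos : 1 ≤ nι := Fintype.card_pos
  have hcard : nι ≤ i := by
    have hfr := hai.finrank_vectorSpan (by omega : Fintype.card ι = (nι - 1) + 1)
    have hle : finrank ℝ (vectorSpan ℝ (Set.range z)) ≤ finrank ℝ (LinearMap.ker g) :=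
      Submodule.finrank_mono hvsker
    rw [hfr, hkerg] at hle
    omega
  -- lift the points z a to vertices
  have hWex : ∀ a : ι, ∃ wv : Fin n → ℝ, wv ∈ E ∪ -E ∧ π wv = z a := by
    intro a
    obtain ⟨wv, hwv, hwveq⟩ := hzr ⟨a, rfl⟩
    exact ⟨wv, hwv, hwveq⟩
  choose Wf hWf1 hWf2 using hWex
  set vf : ι → (Fin n → ℝ) := fun a => if Wf a ∈ E then Wf a else -Wf a with hvfdef
  have hvfE : ∀ a : ι, vf a ∈ E := by
    intro a
    rw [hvfdef]
    by_cases h : Wf a ∈ E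
    · simp [h]
    · have h2 : Wf a ∈ -E := (hWf1 a).resolve_left h
      simp only [h, if_false]
      exact Set.mem_neg.1 h2
  set M := Submodule.span ℝ (Set.range Wf) with hMdef
  have hspan_vW : Submodule.span ℝ (Set.range vf) = M := by
    apply le_antisymm
    · refine Submodule.span_le.2 ?_
      rintro x ⟨a, rfl⟩
      rw [hvfdef]
      by_cases h : Wf a ∈ E
      · simp only [h, if_true]
        exact Submodule.subset_span ⟨a, rfl⟩
      · simp only [h, if_false]
        exact neg_mem (Submodule.subset_span ⟨a, rfl⟩)
    · refine Submodule.span_le.2 ?_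
      rintro x ⟨a, rfl⟩
      by_cases h : Wf a ∈ E
      · have : vf a = Wf a := by rw [hvfdef]; simp [h]
        rw [← this]
        exact Submodule.subset_span ⟨a, rfl⟩
      · have : Wf a = -vf a := by rw [hvfdef]; simp [h]
        rw [this]
        exact neg_mem (Submodule.subset_span ⟨a, rfl⟩)
  set k := finrank ℝ M with hkdef
  have hki : k ≤ i := by
    have h1 : Set.range Wf = ↑(Finset.univ.image Wf) := by
      rw [Finset.coe_image, Finset.coe_univ, Set.image_univ]
    have h2 : finrank ℝ M ≤ (Finset.univ.image Wf).card := by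
      rw [hMdef, h1]
      exact finrank_span_finset_le_card _
    have h3 : (Finset.univ.image Wf).card ≤ nι := by
      calc (Finset.univ.image Wf).card ≤ Finset.univ.card := Finset.card_image_le
      _ = nι := Finset.card_univ
    omega
  have hkn : k < n := lt_of_le_of_lt hki hin
  -- apply the lattice-face property
  set U₀ : Set (Fin n → ℝ) := insert 0 (Set.range vf) with hU₀def
  have h0U₀ : (0 : Fin n → ℝ) ∈ U₀ := Set.mem_insert _ _
  have hspanU₀ : Submodule.span ℝ U₀ = M := by
    rw [hU₀def, Submodule.span_insert_zero, hspan_vW]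
  have hU₀sub : U₀ ⊆ Set.extremePoints ℝ P := by
    rintro x (rfl | ⟨a, rfl⟩)
    · exact h0ext
    · rw [← hE]; exact hvfE a
  have hU₀ne : U₀.Nonempty := ⟨0, h0U₀⟩
  have hdirU : finrank ℝ (affineSpan ℝ U₀).direction = k := by
    rw [direction_affineSpan, vectorSpan_eq_span h0U₀, hspanU₀]
  have hproj := hlf k hkn U₀ hU₀sub hU₀ne hdirU
  have hLM : (affineSpan ℝ U₀ : Set (Fin n → ℝ)) = (M : Set (Fin n → ℝ)) := by
    rw [coe_affineSpan_zero h0U₀, hspanU₀]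
  -- the projection to the first k coordinates is injective on M
  set πkL := LinearMap.funLeft ℝ ℝ (Fin.castLE hkn.le) with hπkdef
  have hπk : ∀ x : Fin n → ℝ, πkL x = projMap n k hkn.le x := fun _ => rfl
  set φ := πkL.comp M.subtype with hφdef
  have hφval : ∀ x : M, φ x = projMap n k hkn.le (x : Fin n → ℝ) := fun _ => rfl
  have hφsurj : Function.Surjective φ := by
    rw [← LinearMap.range_eq_top, ← top_le_iff, ← span_singles_top]
    refine Submodule.span_le.2 ?_
    rintro _ ⟨b, rfl⟩
    have hsb : Pi.single b (1 : ℝ) ∈ intLattice k := single_mem_intLattice b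
    rw [← hproj] at hsb
    obtain ⟨zv, ⟨hzL, hzlat⟩, hzproj⟩ := hsb
    have hzM : zv ∈ M := by rw [← SetLike.mem_coe, ← hLM]; exact hzL
    exact ⟨⟨zv, hzM⟩, by rw [hφval]; exact hzproj⟩
  have hφinj : Function.Injective φ := by
    have heq : finrank ℝ M = finrank ℝ (Fin k → ℝ) := by
      rw [Module.finrank_fin_fun, hkdef]
    exact (LinearMap.injective_iff_surjective_of_finrank_eq_finrank heq).2 hφsurj
  -- the candidate point
  set x₀ := ts • ∑ a : ι, w a • Wf a with hx₀def
  have hx₀M : x₀ ∈ M := by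
    refine Submodule.smul_mem _ _ (Submodule.sum_mem _ fun a _ => ?_)
    exact Submodule.smul_mem _ _ (Submodule.subset_span ⟨a, rfl⟩)
  have hsumSP : (∑ a : ι, w a • Wf a) ∈ SP := by
    rw [hSPE]
    have hcm := Finset.centerMass_mem_convexHull (Finset.univ : Finset ι)
      (w := w) (fun a _ => (hwpos a).le) (by rw [hwsum]; exact one_pos)
      (z := Wf) (fun a _ => hWf1 a)
    rwa [Finset.centerMass_eq_of_sum_1 _ _ hwsum] at hcm
  have hx₀SP : x₀ ∈ l • SP := by
    have h1 : x₀ ∈ ts • SP := ⟨_, hsumSP, rfl⟩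
    exact smul_mono_set hSPconv h0SP htspos htsl h1
  -- the projection of x₀ is y
  set πL := LinearMap.funLeft ℝ ℝ (Fin.castLE hin.le) with hπLdef
  have hππL : ∀ x : Fin n → ℝ, π x = πL x := fun _ => rfl
  have hπx₀ : π x₀ = y := by
    have h1 : πL x₀ = ts • ∑ a : ι, w a • πL (Wf a) := by
      rw [hx₀def, _root_.map_smul, map_sum]
      simp only [_root_.map_smul]
    have h2 : ∀ a : ι, πL (Wf a) = z a := fun a => by
      rw [← hππL]; exact hWf2 a
    rw [hππL, h1]
    have h3 : ∑ a : ι, w a • πL (Wf a) = q := by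
      rw [← hzq]
      exact Finset.sum_congr rfl fun a _ => by rw [h2]
    rw [h3, hqdef, smul_inv_smul₀ htspos.ne']
  -- the point x₀ is a lattice point
  have hx₀lat : x₀ ∈ intLattice n := by
    have hcomp : projMap n k hkn.le x₀ = projMap i k hki y := by
      rw [← hπx₀]
      funext jj
      rfl
    have hξlat : projMap i k hki y ∈ intLattice k := fun jj => hylat (Fin.castLE hki jj)
    rw [← hproj] at hξlat
    obtain ⟨zv, ⟨hzL, hzlat⟩, hzproj⟩ := hξlat
    have hzM : zv ∈ M := by rw [← SetLike.mem_coe, ← hLM]; exact hzL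
    have hfeq : φ ⟨x₀, hx₀M⟩ = φ ⟨zv, hzM⟩ := by
      rw [hφval, hφval]
      show projMap n k hkn.le x₀ = projMap n k hkn.le zv
      rw [hcomp, hzproj]
    have := hφinj hfeq
    have hxz : x₀ = zv := congrArg Subtype.val this
    rw [hxz]
    exact hzlat
  exact ⟨x₀, ⟨hx₀SP, hx₀lat⟩, hπx₀⟩

end Lift

/-- Lemma: if `P ⊆ ℝⁿ` is an `n`-dimensional lattice-face polytope with `0` a vertex of `P`,
and `SP = conv(P ∪ (−P))`, then for all `1 ≤ j ≤ i ≤ n` one has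
`λ_j(π^{(n−i)}(SP), ℤⁱ) ≥ λ_j(SP, ℤⁿ)`. -/
theorem stmt14 (n : ℕ) (hn : 1 ≤ n) (P : Set (Fin n → ℝ))
    (hpoly : ∃ V : Finset (Fin n → ℝ), P = convexHull ℝ (V : Set (Fin n → ℝ)))
    (hdim : affineSpan ℝ P = ⊤)
    (h0 : (0 : Fin n → ℝ) ∈ Set.extremePoints ℝ P)
    (hlf : IsLatticeFace n P)
    (SP : Set (Fin n → ℝ)) (hSP : SP = convexHull ℝ (P ∪ -P))
    (i j : ℕ) (hj : 1 ≤ j) (hji : j ≤ i) (hi : i ≤ n) :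
    succMinima (projMap n i hi '' SP) j ≥ succMinima SP j := by
  classical
  rcases eq_or_lt_of_le hi with heq | hin
  · -- case i = n : the projection is the identity
    subst heq
    have h1 : projMap i i hi = id := by
      funext x jj
      exact congrArg x (Fin.ext rfl)
    rw [h1, Set.image_id]
  · -- case i < n
    have hi1 : 1 ≤ i := le_trans hj hji
    obtain ⟨V, hV⟩ := hpoly
    have hPconv : Convex ℝ P := by rw [hV]; exact convex_convexHull ℝ _
    have hPcomp : IsCompact P := by rw [hV]; exact V.finite_toSet.isCompact_convexHull (𝕜 := ℝ)
    obtain ⟨E, hE⟩ : ∃ E, E = Set.extremePoints ℝ P := ⟨_, rfl⟩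
    have hEV : E ⊆ ↑V := by
      rw [hE, hV]; exact extremePoints_convexHull_subset
    have hEfin : E.Finite := V.finite_toSet.subset hEV
    have hEP : E ⊆ P := by rw [hE]; exact extremePoints_subset
    have hPE : P = convexHull ℝ E := by
      have h1 := closure_convexHull_extremePoints hPcomp hPconv
      have h2 : IsClosed (convexHull ℝ E) := (hEfin.isCompact_convexHull (𝕜 := ℝ)).isClosed
      rw [← hE] at h1
      rw [← h1, h2.closure_eq]
    have hnegE : (-E).Finite := hEfin.preimage (Set.injOn_of_injective neg_injective)
    have hWfin : (E ∪ -E).Finite := hEfin.union hnegE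
    have hPSP : P ⊆ SP := by
      rw [hSP]; exact fun x hx => subset_convexHull ℝ _ (Or.inl hx)
    have hSPE : SP = convexHull ℝ (E ∪ -E) := by
      rw [hSP]
      apply Set.Subset.antisymm
      · apply convexHull_min _ (convex_convexHull ℝ _)
        apply Set.union_subset
        · rw [hPE]; exact convexHull_mono Set.subset_union_left
        · have hnP : -P = convexHull ℝ (-E) := by rw [hPE, convexHull_neg]
          rw [hnP]; exact convexHull_mono Set.subset_union_right
      · apply convexHull_mono
        apply Set.union_subset
        · exact fun x hx => Or.inl (hEP hx)
        · intro x hx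
          refine Or.inr ?_
          rw [Set.mem_neg] at hx ⊢
          exact hEP hx
    have h0P : (0 : Fin n → ℝ) ∈ P := h0.1
    have h0E : (0 : Fin n → ℝ) ∈ E := by rw [hE]; exact h0
    have h0SP : (0 : Fin n → ℝ) ∈ SP := hPSP h0P
    have hSPconv : Convex ℝ SP := by rw [hSPE]; exact convex_convexHull ℝ _
    have hWneg : -(E ∪ -E) = E ∪ -E := by
      ext a
      constructor
      · intro ha
        rw [Set.mem_neg] at ha
        rcases ha with h | h
        · exact Or.inr (Set.mem_neg.2 h)
        · exact Or.inl (by rwa [Set.mem_neg, neg_neg] at h)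
      · intro ha
        rw [Set.mem_neg]
        rcases ha with h | h
        · exact Or.inr (Set.mem_neg.2 (by rwa [neg_neg]))
        · exact Or.inl (Set.mem_neg.1 h)
    have hSPneg : ∀ x ∈ SP, -x ∈ SP := by
      intro x hx
      rw [hSPE] at hx ⊢
      have h1 : -x ∈ -convexHull ℝ (E ∪ -E) := Set.neg_mem_neg.2 hx
      rwa [← convexHull_neg, hWneg] at h1
    have hspanSP : Submodule.span ℝ SP = ⊤ := by
      rw [eq_top_iff]
      have hvs : vectorSpan ℝ P = ⊤ := by
        rw [← direction_affineSpan, hdim]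
        exact AffineSubspace.direction_top ℝ _ _
      rw [← hvs, vectorSpan_def]
      refine Submodule.span_le.2 ?_
      rintro x ⟨a, ha, b, hb, rfl⟩
      have h1 : a ∈ Submodule.span ℝ SP := Submodule.subset_span (hPSP ha)
      have h2 : -b ∈ Submodule.span ℝ SP := Submodule.subset_span (hSPneg b (hPSP hb))
      have h3 := add_mem h1 h2
      simpa [vsub_eq_sub, sub_eq_add_neg] using h3
    -- the projection and its image
    set πL := LinearMap.funLeft ℝ ℝ (Fin.castLE hi) with hπL
    have hπeq : projMap n i hi = ⇑πL := rfl
    have hKhull : projMap n i hi '' SP = convexHull ℝ (projMap n i hi '' (E ∪ -E)) := by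
      rw [hSPE, hπeq]
      exact πL.image_convexHull _
    have hKconv : Convex ℝ (projMap n i hi '' SP) := by
      rw [hKhull]; exact convex_convexHull ℝ _
    have hKcomp : IsCompact (projMap n i hi '' SP) := by
      rw [hKhull]; exact (hWfin.image _).isCompact_convexHull (𝕜 := ℝ)
    have h0K : (0 : Fin i → ℝ) ∈ projMap n i hi '' SP := ⟨0, h0SP, rfl⟩
    have hKneg : ∀ x ∈ projMap n i hi '' SP, -x ∈ projMap n i hi '' SP := by
      rintro x ⟨s, hs, rfl⟩
      exact ⟨-s, hSPneg s hs, rfl⟩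
    have hspanK : Submodule.span ℝ (projMap n i hi '' SP) = ⊤ := by
      rw [hπeq, Submodule.span_image, hspanSP, Submodule.map_top, LinearMap.range_eq_top]
      exact LinearMap.funLeft_surjective_of_injective ℝ ℝ _ (Fin.castLE_injective hi)
    have haffK : affineSpan ℝ (projMap n i hi '' SP) = ⊤ := by
      apply SetLike.coe_injective
      rw [coe_affineSpan_zero h0K, hspanK]
      simp
    have h0intK : (0 : Fin i → ℝ) ∈ interior (projMap n i hi '' SP) := by
      obtain ⟨x, hx⟩ := (hKconv.interior_nonempty_iff_affineSpan_eq_top).2 haffK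
      have hnegx : -x ∈ projMap n i hi '' SP := hKneg x (interior_subset hx)
      have hcomb := hKconv.combo_interior_closure_mem_interior hx (subset_closure hnegx)
        one_half_pos (by norm_num) (by norm_num : (1:ℝ)/2 + 1/2 = 1)
      have heq2 : (1/2 : ℝ) • x + (1/2 : ℝ) • (-x) = 0 := by
        rw [smul_neg]
        exact add_neg_cancel _
      rwa [heq2] at hcomb
    -- nonemptiness of the set of admissible dilates for the projection
    have hSi_ne : ∃ l : ℝ, 0 < l ∧
        j ≤ Module.finrank ℝ
          (Submodule.span ℝ ((l • (projMap n i hi '' SP)) ∩ intLattice i)) := by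
      obtain ⟨ε, hεpos, hball⟩ := Metric.mem_nhds_iff.1 (mem_interior_iff_mem_nhds.1 h0intK)
      have hkey : ∀ v : Fin i → ℝ, ∃ lv : ℝ, 0 < lv ∧ v ∈ lv • (projMap n i hi '' SP) := by
        intro v
        have hlvpos : (0:ℝ) < (‖v‖ + 1) * (2 / ε) := by positivity
        refine ⟨(‖v‖ + 1) * (2 / ε), hlvpos, ?_⟩
        rw [Set.mem_smul_set_iff_inv_smul_mem₀ hlvpos.ne']
        apply hball
        rw [Metric.mem_ball, dist_zero_right, norm_smul, Real.norm_eq_abs,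
          abs_of_pos (inv_pos.2 hlvpos), ← div_eq_inv_mul, div_lt_iff₀ hlvpos]
        have h2 : ε * ((‖v‖ + 1) * (2 / ε)) = 2 * (‖v‖ + 1) := by
          field_simp
        rw [h2]
        nlinarith [norm_nonneg v]
      choose lv hlvpos hlvmem using hkey
      refine ⟨1 + ∑ b : Fin i, lv (Pi.single b 1), ?_, ?_⟩
      · have hsum : (0:ℝ) ≤ ∑ b : Fin i, lv (Pi.single b 1) :=
          Finset.sum_nonneg fun b _ => (hlvpos _).le
        linarith
      · have hmono : ∀ b : Fin i, Pi.single b (1:ℝ) ∈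
            (1 + ∑ c : Fin i, lv (Pi.single c 1)) • (projMap n i hi '' SP) := by
          intro b
          have h1 : lv (Pi.single b 1) ≤ ∑ c : Fin i, lv (Pi.single c 1) :=
            Finset.single_le_sum (f := fun c : Fin i => lv (Pi.single c 1))
              (fun c _ => (hlvpos _).le) (Finset.mem_univ b)
          exact smul_mono_set hKconv h0K (hlvpos _) (by linarith) (hlvmem _)
        have hsub : (Set.range fun b : Fin i => Pi.single b (1:ℝ)) ⊆
            ((1 + ∑ c : Fin i, lv (Pi.single c 1)) • (projMap n i hi '' SP)) ∩ intLattice i := by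
          rintro _ ⟨b, rfl⟩
          exact ⟨hmono b, single_mem_intLattice b⟩
        have htop : Submodule.span ℝ
            (((1 + ∑ c : Fin i, lv (Pi.single c 1)) • (projMap n i hi '' SP)) ∩ intLattice i)
            = ⊤ :=
          eq_top_iff.2 (span_singles_top ▸ Submodule.span_mono hsub)
        rw [htop]
        rw [finrank_top, Module.finrank_fin_fun]
        exact hji
    -- conclude via monotonicity of infima
    rw [ge_iff_le, succMinima, succMinima]
    apply csInf_le_csInf
    · exact ⟨0, fun l hl => hl.1.le⟩
    · obtain ⟨l, hl1, hl2⟩ := hSi_ne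
      exact ⟨l, hl1, hl2⟩
    · intro l hl
      obtain ⟨hlpos, hrank⟩ := hl
      refine ⟨hlpos, ?_⟩
      have hkey : (l • (projMap n i hi '' SP)) ∩ intLattice i ⊆
          projMap n i hi '' ((l • SP) ∩ intLattice n) := by
        rintro y ⟨hyK, hylat⟩
        obtain ⟨x, hx, hπx⟩ := lift_lemma hi1 hin hlf hE
          (by rw [← hE]; exact h0E) hSPE hSPconv h0SP hKconv hKcomp h0intK hKhull
          hlpos hylat hyK
        exact ⟨x, hx, hπx⟩
      calc j ≤ Module.finrank ℝ
            (Submodule.span ℝ ((l • (projMap n i hi '' SP)) ∩ intLattice i)) := hrank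
        _ ≤ Module.finrank ℝ
            (Submodule.span ℝ (projMap n i hi '' ((l • SP) ∩ intLattice n))) :=
          Submodule.finrank_mono (Submodule.span_mono hkey)
        _ = Module.finrank ℝ
            ((Submodule.span ℝ ((l • SP) ∩ intLattice n)).map πL) := by
          rw [hπeq, Submodule.span_image]
        _ ≤ Module.finrank ℝ (Submodule.span ℝ ((l • SP) ∩ intLattice n)) :=
          Submodule.finrank_map_le πL _
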